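/- Let γ_1, γ_2, γ_3, γ_4 be Hermitian operators satisfying γ_i² = 1 and γ_i γ_j = −γ_j γ_i for i ≠ j (Majorana operators). Define U(α) = exp((α/2) γ_2 γ_4) exp((α/4)(γ_1 γ_2 + γ_3 γ_4)). Then U(π) = ½(γ_2 − γ_1)(γ_4 − γ_3), U(π) is unitary, and conjugation by U(π) swaps γ_1 ↔ γ_2 and γ_3 ↔ γ_4: U(π) γ_1 U(π)† = γ_2, U(π) γ_2 U(π)† = γ_1, U(π) γ_3 U(π)† = γ_4, U(π) γ_4 U(π)† = γ_3. -/

import Mathlib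

open NormedSpace

noncomputable def phiHom {A : Type*} [NormedRing A] [NormedAlgebra ℂ A]
    (x : A) (hx : x * x = -1) : ℂ →+* A where
  toFun z := z.re • (1 : A) + z.im • x
  map_one' := by simp
  map_mul' z w := by
    simp only [Complex.mul_re, Complex.mul_im]
    simp only [add_mul, mul_add, smul_mul_assoc, mul_smul_comm, one_mul, mul_one, hx,
      smul_neg, sub_smul, add_smul, smul_smul]
    module
  map_zero' := by simp
  map_add' z w := by
    simp only [Complex.add_re, Complex.add_im, add_smul]
    abel

theorem exp_sq_neg_one {A : Type*} [NormedRing A] [NormedAlgebra ℂ A] [CompleteSpace A]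
    (x : A) (hx : x * x = -1) (t : ℝ) :
    exp ((t : ℂ) • x) = (Real.cos t : ℂ) • 1 + (Real.sin t : ℂ) • x := by
  have hcont : Continuous (phiHom x hx) := by
    simp only [phiHom, RingHom.coe_mk, MonoidHom.coe_mk, OneHom.coe_mk]
    fun_prop
  have key := map_exp_of_mem_ball (𝕂 := ℂ) (phiHom x hx) hcont ((t : ℂ) * Complex.I)
    ((expSeries_radius_eq_top ℂ ℂ).symm ▸ edist_lt_top _ _)
  have h1 : (exp : ℂ → ℂ) = Complex.exp := by
    exact Complex.exp_eq_exp_ℂ.symm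
  rw [h1] at key
  rw [Complex.exp_mul_I] at key
  have h3 : (phiHom x hx) ((t : ℂ) * Complex.I) = (t : ℝ) • x := by
    simp [phiHom]
  have h4 : (phiHom x hx) (Complex.cos t + Complex.sin t * Complex.I)
      = (Real.cos t : ℝ) • (1 : A) + (Real.sin t : ℝ) • x := by
    simp [phiHom, Complex.cos_ofReal_re, Complex.cos_ofReal_im, Complex.sin_ofReal_re]
  rw [h3, h4] at key
  rw [show ((t:ℝ):ℂ) • x = (t:ℝ) • x from Complex.coe_smul t x, ← key,
    show ((Real.cos t : ℝ):ℂ) • (1:A) = (Real.cos t : ℝ) • 1 from Complex.coe_smul _ _,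
    show ((Real.sin t : ℝ):ℂ) • x = (Real.sin t : ℝ) • x from Complex.coe_smul _ _]

theorem stmt15 {A : Type*} [NormedRing A] [NormedAlgebra ℂ A] [CompleteSpace A]
    [StarRing A]
    (γ : Fin 4 → A)
    (hherm : ∀ i, star (γ i) = γ i)
    (hsq : ∀ i, γ i * γ i = 1)
    (hanti : ∀ i j, i ≠ j → γ i * γ j = -(γ j * γ i))
    (U : A)
    (hU : U = exp (((Real.pi / 2 : ℝ) : ℂ) • (γ 1 * γ 3))
      * exp (((Real.pi / 4 : ℝ) : ℂ) • (γ 0 * γ 1 + γ 2 * γ 3))) :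
    U = ((2 : ℂ)⁻¹) • ((γ 1 - γ 0) * (γ 3 - γ 2)) ∧
      U * star U = 1 ∧ star U * U = 1 ∧
      U * γ 0 * star U = γ 1 ∧ U * γ 1 * star U = γ 0 ∧
      U * γ 2 * star U = γ 3 ∧ U * γ 3 * star U = γ 2 := by
  -- abbreviations and relations
  have w10 : γ 1 * γ 0 = -(γ 0 * γ 1) := hanti 1 0 (by decide)
  have w20 : γ 2 * γ 0 = -(γ 0 * γ 2) := hanti 2 0 (by decide)
  have w21 : γ 2 * γ 1 = -(γ 1 * γ 2) := hanti 2 1 (by decide)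
  have w30 : γ 3 * γ 0 = -(γ 0 * γ 3) := hanti 3 0 (by decide)
  have w31 : γ 3 * γ 1 = -(γ 1 * γ 3) := hanti 3 1 (by decide)
  have w32 : γ 3 * γ 2 = -(γ 2 * γ 3) := hanti 3 2 (by decide)
  have s10 : ∀ x : A, γ 1 * (γ 0 * x) = -(γ 0 * (γ 1 * x)) := fun x => by
    rw [← mul_assoc, w10, neg_mul, mul_assoc]
  have s20 : ∀ x : A, γ 2 * (γ 0 * x) = -(γ 0 * (γ 2 * x)) := fun x => by
    rw [← mul_assoc, w20, neg_mul, mul_assoc]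
  have s21 : ∀ x : A, γ 2 * (γ 1 * x) = -(γ 1 * (γ 2 * x)) := fun x => by
    rw [← mul_assoc, w21, neg_mul, mul_assoc]
  have s30 : ∀ x : A, γ 3 * (γ 0 * x) = -(γ 0 * (γ 3 * x)) := fun x => by
    rw [← mul_assoc, w30, neg_mul, mul_assoc]
  have s31 : ∀ x : A, γ 3 * (γ 1 * x) = -(γ 1 * (γ 3 * x)) := fun x => by
    rw [← mul_assoc, w31, neg_mul, mul_assoc]
  have s32 : ∀ x : A, γ 3 * (γ 2 * x) = -(γ 2 * (γ 3 * x)) := fun x => by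
    rw [← mul_assoc, w32, neg_mul, mul_assoc]
  have sq' : ∀ (i : Fin 4) (x : A), γ i * (γ i * x) = x := fun i x => by
    rw [← mul_assoc, hsq, one_mul]
  -- exponentials
  have hx1 : (γ 1 * γ 3) * (γ 1 * γ 3) = -1 := by
    simp only [mul_assoc, s10, s20, s21, s30, s31, s32, w10, w20, w21, w30, w31, w32,
      mul_neg, neg_neg, sq', hsq, mul_one]
  have hab : (γ 0 * γ 1) * (γ 0 * γ 1) = -1 := by
    simp only [mul_assoc, s10, s20, s21, s30, s31, s32, w10, w20, w21, w30, w31, w32,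
      mul_neg, neg_neg, sq', hsq, mul_one]
  have hcd : (γ 2 * γ 3) * (γ 2 * γ 3) = -1 := by
    simp only [mul_assoc, s10, s20, s21, s30, s31, s32, w10, w20, w21, w30, w31, w32,
      mul_neg, neg_neg, sq', hsq, mul_one]
  have e1 : exp (((Real.pi / 2 : ℝ) : ℂ) • (γ 1 * γ 3)) = γ 1 * γ 3 := by
    rw [exp_sq_neg_one _ hx1, Real.cos_pi_div_two, Real.sin_pi_div_two]
    simp
  have hcomm : Commute (((Real.pi / 4 : ℝ) : ℂ) • (γ 0 * γ 1))
      (((Real.pi / 4 : ℝ) : ℂ) • (γ 2 * γ 3)) := by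
    apply Commute.smul_left; apply Commute.smul_right
    show _ = _
    simp only [mul_assoc, s10, s20, s21, s30, s31, s32, w10, w20, w21, w30, w31, w32,
      mul_neg, neg_neg, neg_mul, sq', hsq, mul_one]
  have e2 : exp (((Real.pi / 4 : ℝ) : ℂ) • (γ 0 * γ 1 + γ 2 * γ 3))
      = (((Real.sqrt 2 / 2 : ℝ) : ℂ) • (1 + γ 0 * γ 1))
        * (((Real.sqrt 2 / 2 : ℝ) : ℂ) • (1 + γ 2 * γ 3)) := by
    rw [smul_add, exp_add_of_commute_of_mem_ball (𝕂 := ℂ) hcomm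
      ((expSeries_radius_eq_top ℂ A).symm ▸ edist_lt_top _ _)
      ((expSeries_radius_eq_top ℂ A).symm ▸ edist_lt_top _ _), exp_sq_neg_one _ hab, exp_sq_neg_one _ hcd,
      Real.cos_pi_div_four, Real.sin_pi_div_four, smul_add, smul_add]
  have hs : ((Real.sqrt 2 / 2 : ℝ) : ℂ) * ((Real.sqrt 2 / 2 : ℝ) : ℂ) = (2 : ℂ)⁻¹ := by
    norm_cast
    rw [div_mul_div_comm, Real.mul_self_sqrt (by norm_num)]
    norm_num
  have hU' : U = ((2 : ℂ)⁻¹) • ((γ 1 - γ 0) * (γ 3 - γ 2)) := by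
    rw [hU, e1, e2, smul_mul_smul_comm, hs]
    rw [mul_smul_comm]
    congr 1
    simp only [mul_add, add_mul, mul_sub, sub_mul, mul_one, one_mul, mul_neg, neg_mul,
      mul_assoc, sq', s10, s20, s21, s30, s31, s32, w10, w20, w21, w30, w31, w32,
      hsq, neg_neg]
    module
  have h2U : (2 : ℂ) • U = (γ 1 - γ 0) * (γ 3 - γ 2) := by
    rw [hU', smul_smul, show (2:ℂ) * 2⁻¹ = 1 by norm_num, one_smul]
  have h2s : (2 : ℂ) • star U = (γ 3 - γ 2) * (γ 1 - γ 0) := by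
    have h := congrArg star h2U
    rw [show (2:ℂ) • U = U + U by rw [two_smul], star_add, star_mul, star_sub, star_sub,
      hherm, hherm, hherm, hherm] at h
    rw [show (2:ℂ) • star U = star U + star U by rw [two_smul], h]
  have hstar : star U = ((2 : ℂ)⁻¹) • ((γ 3 - γ 2) * (γ 1 - γ 0)) := by
    rw [← h2s, smul_smul, show (2:ℂ)⁻¹ * 2 = 1 by norm_num, one_smul]
  refine ⟨hU', ?_, ?_, ?_, ?_, ?_, ?_⟩ <;>
    rw [hstar, hU'] <;>
    simp only [smul_mul_assoc, mul_smul_comm, smul_smul] <;>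
    rw [show ((2:ℂ)⁻¹ * 2⁻¹) = (4:ℂ)⁻¹ by norm_num] <;>
    simp only [mul_add, add_mul, mul_sub, sub_mul, mul_one, one_mul, mul_neg, neg_mul,
      mul_assoc, sq', s10, s20, s21, s30, s31, s32, w10, w20, w21, w30, w31, w32,
      hsq, neg_neg, neg_sub, sub_neg_eq_add] <;>
    match_scalars <;> norm_num
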